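/- Let X be a measurable space, P a probability measure on X, N ≥ 1, and F a countable nonempty set of measurable functions f : X → ℝ with 0 ≤ f(x) ≤ 1 for all f ∈ F and x ∈ X. Then the expected uniform deviation satisfies the symmetrization bound: E_{x∼P^{⊗N}} [ sup_{f ∈ F} ( E_P[f] − (1/N)·Σ_{i=1}^N f(x_i) ) ] ≤ (2/N) · E_{x∼P^{⊗N}} E_σ [ sup_{f ∈ F} Σ_{i=1}^N σ_i f(x_i) ], where σ = (σ₁,…,σ_N) is uniform on {−1,+1}^N and independent of x. -/

import Mathlib

open MeasureTheory Real
open scoped ENNReal NNReal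

section SymmAux
variable {X : Type*}
lemma abs_iSup_le_of_abs_le {g : ℕ → ℝ} {C : ℝ} (h : ∀ n, |g n| ≤ C) :
    |⨆ n, g n| ≤ C := by
  have hB : BddAbove (Set.range g) := ⟨C, by rintro _ ⟨n, rfl⟩; exact (abs_le.1 (h n)).2⟩
  rw [abs_le]
  exact ⟨le_trans (abs_le.1 (h 0)).1 (le_ciSup hB 0), ciSup_le fun n => (abs_le.1 (h n)).2⟩
lemma bddAbove_of_abs_le {g : ℕ → ℝ} {C : ℝ} (h : ∀ n, |g n| ≤ C) :
    BddAbove (Set.range g) := ⟨C, by rintro _ ⟨n, rfl⟩; exact (abs_le.1 (h n)).2⟩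
lemma integrable_of_abs_le' {α : Type*} [MeasurableSpace α] {m : Measure α}
    [IsFiniteMeasure m] {g : α → ℝ} (hg : AEStronglyMeasurable g m) {C : ℝ}
    (h : ∀ a, |g a| ≤ C) : Integrable g m :=
  (integrable_const C).mono' hg
    (Filter.Eventually.of_forall (by simpa [Real.norm_eq_abs] using h))
lemma integrable_of_abs_le {α : Type*} [MeasurableSpace α] {m : Measure α}
    [IsFiniteMeasure m] {g : α → ℝ} (hg : Measurable g) {C : ℝ}
    (h : ∀ a, |g a| ≤ C) : Integrable g m :=
  integrable_of_abs_le' hg.aestronglyMeasurable h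
lemma abs_sum_le_card {ι : Type*} [Fintype ι] (c : ι → ℝ) (h : ∀ i, |c i| ≤ 1) :
    |∑ i, c i| ≤ (Fintype.card ι : ℝ) := by
  calc |∑ i, c i| ≤ ∑ i, |c i| := Finset.abs_sum_le_sum_abs _ _
    _ ≤ ∑ _i : ι, (1 : ℝ) := Finset.sum_le_sum fun i _ => h i
    _ = (Fintype.card ι : ℝ) := by simp
noncomputable def VV (e : ℕ → X → ℝ) {N : ℕ} (σ : Fin N → Bool) (x : Fin N → X) : ℝ :=
  ⨆ n, ∑ i, (if σ i then (1 : ℝ) else -1) * e n (x i)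
noncomputable def UU (e : ℕ → X → ℝ) {N : ℕ} (σ : Fin N → Bool)
    (ω : Fin N ⊕ Fin N → X) : ℝ :=
  ⨆ n, ∑ i, (if σ i then (1 : ℝ) else -1) * (e n (ω (Sum.inr i)) - e n (ω (Sum.inl i)))
noncomputable def TT (e : ℕ → X → ℝ) {N : ℕ} (p : (Fin N → X) × (Fin N → X)) : ℝ :=
  ⨆ n, ∑ i, (e n (p.2 i) - e n (p.1 i))
variable [MeasurableSpace X]

theorem symm_aux (P : Measure X) [IsProbabilityMeasure P] {N : ℕ} (hN : 1 ≤ N)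
    (e : ℕ → X → ℝ) (hme : ∀ n, Measurable (e n))
    (hbd : ∀ n x, e n x ∈ Set.Icc (0 : ℝ) 1) :
    ∫ x : Fin N → X, (⨆ n, ((∫ y, e n y ∂P) - (1 / (N : ℝ)) * ∑ i, e n (x i)))
        ∂(Measure.pi fun _ => P)
      ≤ (2 / (N : ℝ)) * ∫ x : Fin N → X,
          (∑ σ : Fin N → Bool, VV e σ x) / 2 ^ N ∂(Measure.pi fun _ => P) := by
  set μ : Measure (Fin N → X) := Measure.pi fun _ => P with hμdef
  set ν : Measure (Fin N ⊕ Fin N → X) := Measure.pi fun _ => P with hνdef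
  have hNpos : (0 : ℝ) < N := by exact_mod_cast hN
  have hNne : (N : ℝ) ≠ 0 := ne_of_gt hNpos
  have habs : ∀ n x, |e n x| ≤ 1 := fun n x =>
    abs_le.2 ⟨by linarith [(hbd n x).1], (hbd n x).2⟩
  have habs1 : ∀ (b : Bool) (u : ℝ), |u| ≤ 1 → |(if b then (1:ℝ) else -1) * u| ≤ 1 := by
    intro b u hu; rw [abs_mul]; cases b <;> simpa using hu
  have hdiff : ∀ n (x y : X), |e n x - e n y| ≤ 1 := fun n x y =>
    abs_le.2 ⟨by linarith [(hbd n x).1, (hbd n y).2], by linarith [(hbd n x).2, (hbd n y).1]⟩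
  -- expectation bound
  have hEbd : ∀ n, |∫ y, e n y ∂P| ≤ 1 := by
    intro n
    have := norm_integral_le_of_norm_le_const (μ := P) (C := 1) (f := e n)
      (Filter.Eventually.of_forall fun y => by
        rw [Real.norm_eq_abs]; exact habs n y)
    simpa [Real.norm_eq_abs] using this
  -- marginals of the product measure
  have hmapeval : ∀ i : Fin N, μ.map (fun x => x i) = P := by
    intro i
    refine Measure.ext fun s hs => ?_
    rw [Measure.map_apply (measurable_pi_apply i) hs]
    have hpre : (fun x : Fin N → X => x i) ⁻¹' s
        = Set.pi Set.univ (Function.update (fun _ : Fin N => (Set.univ : Set X)) i s) :=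
      Set.eval_preimage
    rw [hμdef, hpre, Measure.pi_pi]
    have : ∀ j, P (Function.update (fun _ : Fin N => (Set.univ : Set X)) i s j)
        = if j = i then P s else 1 := by
      intro j; rw [Function.update_apply]; split <;> simp
    rw [Finset.prod_congr rfl fun j _ => this j]
    simp
  have hmarg : ∀ n (i : Fin N), ∫ x, e n (x i) ∂μ = ∫ y, e n y ∂P := by
    intro n i
    rw [← hmapeval i,
      integral_map (measurable_pi_apply i).aemeasurable (hme n).aestronglyMeasurable]
  have hIntEval : ∀ n (i : Fin N), Integrable (fun x : Fin N → X => e n (x i)) μ :=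
    fun n i => integrable_of_abs_le ((hme n).comp (measurable_pi_apply i))
      (fun a => habs n (a i))
  -- bounds and measurability for TT
  have hTTterm : ∀ (p : (Fin N → X) × (Fin N → X)) n,
      |∑ i, (e n (p.2 i) - e n (p.1 i))| ≤ (N : ℝ) := by
    intro p n
    have := abs_sum_le_card (fun i : Fin N => e n (p.2 i) - e n (p.1 i))
      (fun i => hdiff n _ _)
    simpa using this
  have hTTabs : ∀ p, |TT e p| ≤ (N : ℝ) := fun p =>
    abs_iSup_le_of_abs_le (hTTterm p)
  have hTTmeas : Measurable (TT e : ((Fin N → X) × (Fin N → X)) → ℝ) := by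
    refine Measurable.iSup fun n => Finset.measurable_sum _ fun i _ => ?_
    exact ((hme n).comp ((measurable_pi_apply i).comp measurable_snd)).sub
      ((hme n).comp ((measurable_pi_apply i).comp measurable_fst))
  -- Step 1: ghost sample bound, pointwise
  have step1 : ∀ x : Fin N → X,
      (⨆ n, ((∫ y, e n y ∂P) - (1 / (N : ℝ)) * ∑ i, e n (x i)))
        ≤ (1 / (N : ℝ)) * ∫ x', TT e (x, x') ∂μ := by
    intro x
    refine ciSup_le fun n => ?_
    have hGhost : (∫ y, e n y ∂P) - (1 / (N : ℝ)) * ∑ i, e n (x i)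
        = (1 / (N : ℝ)) * ∫ x', (∑ i, (e n (x' i) - e n (x i))) ∂μ := by
      have hval : ∫ x', (∑ i, (e n (x' i) - e n (x i))) ∂μ
          = ∑ i : Fin N, ((∫ y, e n y ∂P) - e n (x i)) := by
        rw [integral_finset_sum (f := fun (i : Fin N) (x' : Fin N → X) => e n (x' i) - e n (x i))
          _ fun i _ => (hIntEval n i).sub (integrable_const _)]
        refine Finset.sum_congr rfl fun i _ => ?_
        rw [integral_sub (hIntEval n i) (integrable_const _), integral_const,
          probReal_univ, one_smul, hmarg]
      rw [hval, Finset.sum_sub_distrib, Finset.sum_const, Finset.card_univ,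
        Fintype.card_fin, nsmul_eq_mul]
      field_simp
    rw [hGhost]
    refine mul_le_mul_of_nonneg_left ?_ (by positivity)
    refine integral_mono
      (integrable_finset_sum _ fun i _ => (hIntEval n i).sub (integrable_const _))
      (integrable_of_abs_le (hTTmeas.comp measurable_prodMk_left)
        (fun a => hTTabs (x, a)))
      (fun x' => ?_)
    exact le_ciSup (bddAbove_of_abs_le (fun m => hTTterm (x, x') m)) n
  -- measurability and bounds for the LHS integrand
  have hSmeas : Measurable (fun x : Fin N → X =>
      ⨆ n, ((∫ y, e n y ∂P) - (1 / (N : ℝ)) * ∑ i, e n (x i))) := by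
    refine Measurable.iSup fun n => ?_
    exact measurable_const.sub (measurable_const.mul
      (Finset.measurable_sum _ fun i _ => (hme n).comp (measurable_pi_apply i)))
  have hsumabs : ∀ n (x : Fin N → X), |(1 / (N : ℝ)) * ∑ i, e n (x i)| ≤ 1 := by
    intro n x
    rw [abs_mul, abs_of_nonneg (by positivity : (0:ℝ) ≤ 1 / (N:ℝ))]
    have h1 : |∑ i, e n (x i)| ≤ (N : ℝ) := by
      have := abs_sum_le_card (fun i : Fin N => e n (x i)) (fun i => habs n (x i))
      simpa using this
    calc (1 / (N:ℝ)) * |∑ i, e n (x i)| ≤ (1 / (N:ℝ)) * N :=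
          mul_le_mul_of_nonneg_left h1 (by positivity)
      _ = 1 := by field_simp
  have hSabs : ∀ x : Fin N → X, |⨆ n, ((∫ y, e n y ∂P) - (1 / (N : ℝ)) * ∑ i, e n (x i))| ≤ 2 := by
    intro x
    refine abs_iSup_le_of_abs_le fun n => ?_
    have h1 := abs_le.1 (hEbd n); have h2 := abs_le.1 (hsumabs n x)
    rw [abs_le]
    exact ⟨by linarith [h1.1, h2.2], by linarith [h1.2, h2.1]⟩
  -- the inner ghost integral
  have hGsm : StronglyMeasurable (fun x : Fin N → X => ∫ x', TT e (x, x') ∂μ) :=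
    hTTmeas.stronglyMeasurable.integral_prod_right'
  have hGabs : ∀ x, |∫ x', TT e (x, x') ∂μ| ≤ (N:ℝ) := by
    intro x
    have := norm_integral_le_of_norm_le_const (μ := μ) (C := (N:ℝ))
      (f := fun x' => TT e (x, x'))
      (Filter.Eventually.of_forall fun a => by rw [Real.norm_eq_abs]; exact hTTabs (x, a))
    simpa [Real.norm_eq_abs, measure_univ] using this
  have hGint : Integrable (fun x => ∫ x', TT e (x, x') ∂μ) μ :=
    integrable_of_abs_le' hGsm.aestronglyMeasurable hGabs
  -- Step 2: integrate the pointwise bound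
  have step2 : ∫ x, (⨆ n, ((∫ y, e n y ∂P) - (1 / (N : ℝ)) * ∑ i, e n (x i))) ∂μ
      ≤ (1 / (N : ℝ)) * ∫ x, (∫ x', TT e (x, x') ∂μ) ∂μ := by
    calc ∫ x, (⨆ n, ((∫ y, e n y ∂P) - (1 / (N : ℝ)) * ∑ i, e n (x i))) ∂μ
        ≤ ∫ x, (1 / (N : ℝ)) * ∫ x', TT e (x, x') ∂μ ∂μ :=
          integral_mono (integrable_of_abs_le hSmeas hSabs) (hGint.const_mul _) step1
      _ = (1 / (N : ℝ)) * ∫ x, (∫ x', TT e (x, x') ∂μ) ∂μ := integral_const_mul _ _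
  -- Step 3: Fubini and transfer to the doubled sample space
  have hTTint : Integrable (TT e) (μ.prod μ) := integrable_of_abs_le hTTmeas hTTabs
  have hFub : ∫ x, (∫ x', TT e (x, x') ∂μ) ∂μ = ∫ p, TT e p ∂(μ.prod μ) :=
    (integral_prod _ hTTint).symm
  set κ := MeasurableEquiv.sumPiEquivProdPi (fun _ : Fin N ⊕ Fin N => X) with hκdef
  have hκmp : MeasurePreserving κ ν (μ.prod μ) :=
    measurePreserving_sumPiEquivProdPi fun _ => P
  have hκapp : ∀ ω, TT e (κ ω) = UU e (fun _ => true) ω := by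
    intro ω
    simp [TT, UU, hκdef, MeasurableEquiv.coe_sumPiEquivProdPi, Equiv.sumPiEquivProdPi]
  have htrans : ∫ p, TT e p ∂(μ.prod μ) = ∫ ω, UU e (fun _ => true) ω ∂ν := by
    rw [← hκmp.integral_comp' (TT e)]
    exact integral_congr_ae (Filter.Eventually.of_forall fun ω => hκapp ω)
  -- bounds and measurability for UU and VV
  have hUUterm : ∀ (σ : Fin N → Bool) (ω : Fin N ⊕ Fin N → X) (n : ℕ),
      |∑ i, (if σ i then (1:ℝ) else -1) * (e n (ω (Sum.inr i)) - e n (ω (Sum.inl i)))|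
        ≤ (N : ℝ) := by
    intro σ ω n
    have := abs_sum_le_card
      (fun i : Fin N => (if σ i then (1:ℝ) else -1) * (e n (ω (Sum.inr i)) - e n (ω (Sum.inl i))))
      (fun i => habs1 _ _ (hdiff n _ _))
    simpa using this
  have hUUabs : ∀ σ ω, |UU e σ ω| ≤ (N : ℝ) := fun σ ω =>
    abs_iSup_le_of_abs_le (hUUterm σ ω)
  have hUUmeas : ∀ σ, Measurable (UU e σ : (Fin N ⊕ Fin N → X) → ℝ) := by
    intro σ
    refine Measurable.iSup fun n => Finset.measurable_sum _ fun i _ => ?_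
    exact measurable_const.mul (((hme n).comp (measurable_pi_apply (Sum.inr i))).sub
      ((hme n).comp (measurable_pi_apply (Sum.inl i))))
  have hUUint : ∀ σ, Integrable (UU e σ) ν := fun σ =>
    integrable_of_abs_le (hUUmeas σ) (hUUabs σ)
  have hVterm : ∀ (σ : Fin N → Bool) (x : Fin N → X) (n : ℕ),
      |∑ i, (if σ i then (1:ℝ) else -1) * e n (x i)| ≤ (N : ℝ) := by
    intro σ x n
    have := abs_sum_le_card (fun i : Fin N => (if σ i then (1:ℝ) else -1) * e n (x i))
      (fun i => habs1 _ _ (habs n _))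
    simpa using this
  have hVabs : ∀ σ x, |VV e σ x| ≤ (N : ℝ) := fun σ x =>
    abs_iSup_le_of_abs_le (hVterm σ x)
  have hVmeas : ∀ σ, Measurable (VV e σ : (Fin N → X) → ℝ) := by
    intro σ
    refine Measurable.iSup fun n => Finset.measurable_sum _ fun i _ => ?_
    exact measurable_const.mul ((hme n).comp (measurable_pi_apply i))
  -- Step 4: sign-flip invariance of the symmetrized integral
  have flip : ∀ σ : Fin N → Bool,
      ∫ ω, UU e σ ω ∂ν = ∫ ω, UU e (fun _ => true) ω ∂ν := by
    intro σ
    classical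
    set pe : (Fin N ⊕ Fin N) ≃ (Fin N ⊕ Fin N) :=
      { toFun := Sum.elim (fun i => if σ i then Sum.inl i else Sum.inr i)
          (fun i => if σ i then Sum.inr i else Sum.inl i)
        invFun := Sum.elim (fun i => if σ i then Sum.inl i else Sum.inr i)
          (fun i => if σ i then Sum.inr i else Sum.inl i)
        left_inv := by rintro (i | i) <;> by_cases h : σ i <;> simp [h]
        right_inv := by rintro (i | i) <;> by_cases h : σ i <;> simp [h] } with hpedef
    have hpesymm : ∀ b, pe.symm b = pe b := fun b => rfl
    have hmp : MeasurePreserving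
        (MeasurableEquiv.piCongrLeft (fun _ : Fin N ⊕ Fin N => X) pe) ν ν :=
      measurePreserving_piCongrLeft (fun _ => P) pe
    have happ : ∀ (ω : Fin N ⊕ Fin N → X) (b : Fin N ⊕ Fin N),
        (MeasurableEquiv.piCongrLeft (fun _ : Fin N ⊕ Fin N => X) pe) ω b = ω (pe b) := by
      intro ω b
      rw [MeasurableEquiv.coe_piCongrLeft]
      have h2 := Equiv.piCongrLeft_apply_apply (fun _ : Fin N ⊕ Fin N => X) pe ω (pe.symm b)
      rw [Equiv.apply_symm_apply] at h2
      rw [h2, hpesymm]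
    have hpoint : ∀ ω, UU e (fun _ => true)
        ((MeasurableEquiv.piCongrLeft (fun _ : Fin N ⊕ Fin N => X) pe) ω) = UU e σ ω := by
      intro ω
      simp only [UU, happ]
      congr 1; funext n
      refine Finset.sum_congr rfl fun i _ => ?_
      by_cases h : σ i <;> simp [hpedef, h] <;> ring
    rw [← hmp.integral_comp' (UU e (fun _ => true))]
    exact integral_congr_ae (Filter.Eventually.of_forall fun ω => (hpoint ω).symm)
  -- Step 5: average over all sign patterns
  have hcard : (Fintype.card (Fin N → Bool) : ℝ) = 2 ^ N := by
    simp [Fintype.card_fun]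
  have havg : ∫ ω, UU e (fun _ => true) ω ∂ν
      = (∑ σ : Fin N → Bool, ∫ ω, UU e σ ω ∂ν) / 2 ^ N := by
    rw [Finset.sum_congr rfl fun σ _ => flip σ, Finset.sum_const, Finset.card_univ,
      nsmul_eq_mul, hcard, mul_div_cancel_left₀ _ (by positivity : ((2:ℝ)^N) ≠ 0)]
  have hsum_int : ∑ σ : Fin N → Bool, ∫ ω, UU e σ ω ∂ν
      = ∫ ω, (∑ σ : Fin N → Bool, UU e σ ω) ∂ν :=
    (integral_finset_sum _ fun σ _ => hUUint σ).symm
  -- Step 6: split the symmetrized supremum into two Rademacher sups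
  have hsplit : ∀ (σ : Fin N → Bool) (ω : Fin N ⊕ Fin N → X),
      UU e σ ω ≤ VV e σ (fun i => ω (Sum.inr i))
        + VV e (fun i => !σ i) (fun i => ω (Sum.inl i)) := by
    intro σ ω
    refine ciSup_le fun n => ?_
    have h1 : ∑ i, (if σ i then (1:ℝ) else -1) * (e n (ω (Sum.inr i)) - e n (ω (Sum.inl i)))
        = (∑ i, (if σ i then (1:ℝ) else -1) * e n (ω (Sum.inr i)))
          + ∑ i, (if !σ i then (1:ℝ) else -1) * e n (ω (Sum.inl i)) := by
      rw [← Finset.sum_add_distrib]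
      refine Finset.sum_congr rfl fun i _ => ?_
      by_cases h : σ i <;> simp [h] <;> ring
    rw [h1]
    exact add_le_add
      (le_ciSup (bddAbove_of_abs_le (fun m => hVterm σ (fun i => ω (Sum.inr i)) m)) n)
      (le_ciSup (bddAbove_of_abs_le
        (fun m => hVterm (fun i => !σ i) (fun i => ω (Sum.inl i)) m)) n)
  have hnot : ∀ y : Fin N → X,
      ∑ σ : Fin N → Bool, VV e (fun i => !σ i) y = ∑ σ : Fin N → Bool, VV e σ y := by
    intro y
    exact Fintype.sum_bijective (fun σ : Fin N → Bool => fun i => !σ i)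
      (Function.Involutive.bijective fun σ => by funext i; simp) _ _ (fun σ => rfl)
  have hRpoint : ∀ ω : Fin N ⊕ Fin N → X, (∑ σ : Fin N → Bool, UU e σ ω)
      ≤ (∑ σ : Fin N → Bool, VV e σ (fun i => ω (Sum.inr i)))
        + (∑ σ : Fin N → Bool, VV e σ (fun i => ω (Sum.inl i))) := by
    intro ω
    calc (∑ σ : Fin N → Bool, UU e σ ω)
        ≤ ∑ σ : Fin N → Bool, (VV e σ (fun i => ω (Sum.inr i))
            + VV e (fun i => !σ i) (fun i => ω (Sum.inl i))) :=
          Finset.sum_le_sum fun σ _ => hsplit σ ω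
      _ = (∑ σ : Fin N → Bool, VV e σ (fun i => ω (Sum.inr i)))
          + ∑ σ : Fin N → Bool, VV e (fun i => !σ i) (fun i => ω (Sum.inl i)) :=
          Finset.sum_add_distrib
      _ = _ := by rw [hnot]
  -- the Rademacher-complexity integrand
  have hRmeas : Measurable (fun x : Fin N → X => ∑ σ : Fin N → Bool, VV e σ x) :=
    Finset.measurable_sum _ fun σ _ => hVmeas σ
  have hRabs : ∀ x : Fin N → X, |∑ σ : Fin N → Bool, VV e σ x| ≤ 2 ^ N * N := by
    intro x
    calc |∑ σ : Fin N → Bool, VV e σ x| ≤ ∑ σ : Fin N → Bool, |VV e σ x| :=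
          Finset.abs_sum_le_sum_abs _ _
      _ ≤ ∑ _σ : Fin N → Bool, (N : ℝ) := Finset.sum_le_sum fun σ _ => hVabs σ x
      _ = 2 ^ N * N := by rw [Finset.sum_const, Finset.card_univ, nsmul_eq_mul, hcard]
  have hRint : Integrable (fun x => ∑ σ : Fin N → Bool, VV e σ x) μ :=
    integrable_of_abs_le hRmeas hRabs
  -- transport the two marginals back to μ
  have hmeasp1 : Measurable (fun ω : Fin N ⊕ Fin N → X => fun i : Fin N => ω (Sum.inl i)) :=
    measurable_pi_lambda _ fun i => measurable_pi_apply _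
  have hmeasp2 : Measurable (fun ω : Fin N ⊕ Fin N → X => fun i : Fin N => ω (Sum.inr i)) :=
    measurable_pi_lambda _ fun i => measurable_pi_apply _
  have hmap1 : ν.map (fun ω : Fin N ⊕ Fin N → X => fun i : Fin N => ω (Sum.inl i)) = μ := by
    have hfst : (fun ω : Fin N ⊕ Fin N → X => fun i : Fin N => ω (Sum.inl i))
        = Prod.fst ∘ κ := rfl
    rw [hfst, ← Measure.map_map measurable_fst κ.measurable, hκmp.map_eq,
      Measure.map_fst_prod, measure_univ, one_smul]
  have hmap2 : ν.map (fun ω : Fin N ⊕ Fin N → X => fun i : Fin N => ω (Sum.inr i)) = μ := by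
    have hsnd : (fun ω : Fin N ⊕ Fin N → X => fun i : Fin N => ω (Sum.inr i))
        = Prod.snd ∘ κ := rfl
    rw [hsnd, ← Measure.map_map measurable_snd κ.measurable, hκmp.map_eq,
      Measure.map_snd_prod, measure_univ, one_smul]
  have hint1 : ∫ ω, (∑ σ : Fin N → Bool, VV e σ (fun i => ω (Sum.inl i))) ∂ν
      = ∫ x, (∑ σ : Fin N → Bool, VV e σ x) ∂μ := by
    rw [← hmap1, integral_map hmeasp1.aemeasurable hRmeas.aestronglyMeasurable]
  have hint2 : ∫ ω, (∑ σ : Fin N → Bool, VV e σ (fun i => ω (Sum.inr i))) ∂ν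
      = ∫ x, (∑ σ : Fin N → Bool, VV e σ x) ∂μ := by
    rw [← hmap2, integral_map hmeasp2.aemeasurable hRmeas.aestronglyMeasurable]
  have hRcompint1 : Integrable
      (fun ω : Fin N ⊕ Fin N → X => ∑ σ : Fin N → Bool, VV e σ (fun i => ω (Sum.inl i))) ν :=
    integrable_of_abs_le (hRmeas.comp hmeasp1) fun ω => hRabs _
  have hRcompint2 : Integrable
      (fun ω : Fin N ⊕ Fin N → X => ∑ σ : Fin N → Bool, VV e σ (fun i => ω (Sum.inr i))) ν :=
    integrable_of_abs_le (hRmeas.comp hmeasp2) fun ω => hRabs _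
  have hUsum : Integrable (fun ω => ∑ σ : Fin N → Bool, UU e σ ω) ν :=
    integrable_finset_sum _ fun σ _ => hUUint σ
  have hfinal1 : ∫ ω, (∑ σ : Fin N → Bool, UU e σ ω) ∂ν
      ≤ 2 * ∫ x, (∑ σ : Fin N → Bool, VV e σ x) ∂μ := by
    calc ∫ ω, (∑ σ : Fin N → Bool, UU e σ ω) ∂ν
        ≤ ∫ ω, ((∑ σ : Fin N → Bool, VV e σ (fun i => ω (Sum.inr i)))
            + (∑ σ : Fin N → Bool, VV e σ (fun i => ω (Sum.inl i)))) ∂ν :=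
          integral_mono hUsum (hRcompint2.add hRcompint1) hRpoint
      _ = (∫ ω, (∑ σ : Fin N → Bool, VV e σ (fun i => ω (Sum.inr i))) ∂ν)
          + ∫ ω, (∑ σ : Fin N → Bool, VV e σ (fun i => ω (Sum.inl i))) ∂ν :=
          integral_add hRcompint2 hRcompint1
      _ = 2 * ∫ x, (∑ σ : Fin N → Bool, VV e σ x) ∂μ := by rw [hint1, hint2]; ring
  have hdiv : ∫ x, (∑ σ : Fin N → Bool, VV e σ x) / 2 ^ N ∂μ
      = (∫ x, (∑ σ : Fin N → Bool, VV e σ x) ∂μ) / 2 ^ N := integral_div _ _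
  -- final assembly
  calc ∫ x, (⨆ n, ((∫ y, e n y ∂P) - (1 / (N : ℝ)) * ∑ i, e n (x i))) ∂μ
      ≤ (1 / (N : ℝ)) * ∫ x, (∫ x', TT e (x, x') ∂μ) ∂μ := step2
    _ = (1 / (N : ℝ)) * ((∫ ω, (∑ σ : Fin N → Bool, UU e σ ω) ∂ν) / 2 ^ N) := by
        rw [hFub, htrans, havg, hsum_int]
    _ ≤ (1 / (N : ℝ)) * ((2 * ∫ x, (∑ σ : Fin N → Bool, VV e σ x) ∂μ) / 2 ^ N) := by
        refine mul_le_mul_of_nonneg_left ?_ (by positivity)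
        exact (div_le_div_iff_of_pos_right (by positivity)).2 hfinal1
    _ = (2 / (N : ℝ)) * ∫ x, (∑ σ : Fin N → Bool, VV e σ x) / 2 ^ N ∂μ := by
        rw [hdiv]; ring

end SymmAux

/-- **Symmetrization lemma.**
For a probability measure `P`, a countable nonempty class `F` of measurable functions
with values in `[0,1]`, the expected uniform deviation between population risk `E_P[f]`
and empirical risk `(1/N)·Σᵢ f(xᵢ)` over an i.i.d. sample `x ∼ P^{⊗N}` is at most
`2/N` times the Rademacher complexity
`E_{x ∼ P^{⊗N}} E_σ [sup_{f ∈ F} Σᵢ σᵢ f(xᵢ)]`, where the expectation over the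
independent uniform signs `σ ∈ {−1,+1}^N` is written as the average over all `2^N`
sign patterns. -/
theorem symmetrization
    {X : Type*} [MeasurableSpace X] (P : Measure X) [IsProbabilityMeasure P]
    {N : ℕ} (hN : 1 ≤ N)
    (F : Set (X → ℝ)) (hFc : F.Countable) (hFne : F.Nonempty)
    (hFmeas : ∀ f ∈ F, Measurable f)
    (hFbdd : ∀ f ∈ F, ∀ x, f x ∈ Set.Icc (0 : ℝ) 1) :
    ∫ x : Fin N → X,
        sSup {r : ℝ | ∃ f ∈ F, r = (∫ y, f y ∂P) - (1 / (N : ℝ)) * ∑ i, f (x i)}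
        ∂(Measure.pi fun _ => P)
      ≤ (2 / (N : ℝ)) *
        ∫ x : Fin N → X,
          (∑ σ : Fin N → Bool,
            sSup {r : ℝ | ∃ f ∈ F, r = ∑ i, (if σ i then (1 : ℝ) else -1) * f (x i)})
            / 2 ^ N
          ∂(Measure.pi fun _ => P) := by
  obtain ⟨e, hFe⟩ := hFc.exists_eq_range hFne
  have heF : ∀ n, e n ∈ F := fun n => hFe ▸ Set.mem_range_self n
  have hme : ∀ n, Measurable (e n) := fun n => hFmeas _ (heF n)
  have hbd : ∀ n x, e n x ∈ Set.Icc (0 : ℝ) 1 := fun n x => hFbdd _ (heF n) x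
  have h1 : ∀ x : Fin N → X,
      sSup {r : ℝ | ∃ f ∈ F, r = (∫ y, f y ∂P) - (1 / (N : ℝ)) * ∑ i, f (x i)}
        = ⨆ n, ((∫ y, e n y ∂P) - (1 / (N : ℝ)) * ∑ i, e n (x i)) := by
    intro x
    have hset : {r : ℝ | ∃ f ∈ F, r = (∫ y, f y ∂P) - (1 / (N : ℝ)) * ∑ i, f (x i)}
        = Set.range (fun n => (∫ y, e n y ∂P) - (1 / (N : ℝ)) * ∑ i, e n (x i)) := by
      ext r
      simp only [hFe, Set.mem_setOf_eq, Set.mem_range]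
      constructor
      · rintro ⟨f, ⟨n, rfl⟩, rfl⟩; exact ⟨n, rfl⟩
      · rintro ⟨n, rfl⟩; exact ⟨e n, ⟨n, rfl⟩, rfl⟩
    rw [hset]
    rfl
  have h2 : ∀ (σ : Fin N → Bool) (x : Fin N → X),
      sSup {r : ℝ | ∃ f ∈ F, r = ∑ i, (if σ i then (1 : ℝ) else -1) * f (x i)}
        = VV e σ x := by
    intro σ x
    have hset : {r : ℝ | ∃ f ∈ F, r = ∑ i, (if σ i then (1 : ℝ) else -1) * f (x i)}
        = Set.range (fun n => ∑ i, (if σ i then (1 : ℝ) else -1) * e n (x i)) := by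
      ext r
      simp only [hFe, Set.mem_setOf_eq, Set.mem_range]
      constructor
      · rintro ⟨f, ⟨n, rfl⟩, rfl⟩; exact ⟨n, rfl⟩
      · rintro ⟨n, rfl⟩; exact ⟨e n, ⟨n, rfl⟩, rfl⟩
    rw [hset]
    rfl
  simp_rw [h1, h2]
  exact symm_aux P hN e hme hbd
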